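/- arXiv:1807.10963 — 5 statements merged into one kernel-verified Lean document; each statement's English description precedes it below -/
import Mathlib

section
/- Let E be a compact Hausdorff space such that the group of invertible elements of the Banach algebra C(E, ℂ) (continuous complex-valued functions with sup norm) is dense in C(E, ℂ). Then the Lebesgue covering dimension of E is at most 1. -/
/-- Lebesgue covering dimension of `X` is at most `n`: every open cover has an
open shrinking/refinement of order at most `n + 1`. -/
def CoveringDimLE (X : Type*) [TopologicalSpace X] (n : ℕ) : Prop :=
  ∀ (ι : Type) (U : ι → Set X), (∀ i, IsOpen (U i)) → (⋃ i, U i) = Set.univ →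
    ∃ V : ι → Set X, (∀ i, IsOpen (V i)) ∧ (⋃ i, V i) = Set.univ ∧
      (∀ i, V i ⊆ U i) ∧ ∀ x : X, {i | x ∈ V i}.Finite ∧ {i | x ∈ V i}.ncard ≤ n + 1

open Set

lemma norm_sq_complex (u : ℂ) : ‖u‖^2 = u.re^2 + u.im^2 := by
  rw [Complex.sq_norm, Complex.normSq_apply]; ring

/-- Cauchy–Schwarz in ℝ² for a complex number vs. a unit vector. -/
lemma cs_bound (u : ℂ) (c d : ℝ) (hcd : c^2 + d^2 = 1) :
    u.re * c + u.im * d ≤ ‖u‖ := by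
  have h1 := norm_sq_complex u
  nlinarith [norm_nonneg u, sq_nonneg (u.re * d - u.im * c), sq_nonneg (u.re*c + u.im*d - ‖u‖)]

lemma bound1 (c d : ℝ) (hcd : c^2 + d^2 = 1) (z w : ℂ) (hzw : ‖w - z‖ < 1/8)
    (hA : w.re * c + w.im * d = -(1/2)) : z.re * c + z.im * d < -(3/8) := by
  have h := cs_bound (z - w) c d hcd
  have hn : ‖z - w‖ < 1/8 := by rw [norm_sub_rev]; exact hzw
  simp only [Complex.sub_re, Complex.sub_im] at h
  nlinarith

lemma key3 {E : Type*} [TopologicalSpace E] [CompactSpace E] [T2Space E]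
    (hd : Dense {f : C(E, ℂ) | ∀ x, f x ≠ 0})
    (W1 W2 W3 : Set E) (h1 : IsOpen W1) (h2 : IsOpen W2) (h3 : IsOpen W3)
    (hc : W1 ∪ W2 ∪ W3 = Set.univ) :
    ∃ G1 G2 G3 : Set E, IsOpen G1 ∧ IsOpen G2 ∧ IsOpen G3 ∧
      G1 ⊆ W1 ∧ G2 ⊆ W2 ∧ G3 ⊆ W3 ∧ G1 ∪ G2 ∪ G3 = Set.univ ∧ G1 ∩ G2 ∩ G3 = ∅ := by
  set s3 : ℝ := Real.sqrt 3 with hs3def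
  have hs3 : s3 ^ 2 = 3 := Real.sq_sqrt (by norm_num)
  -- partition of unity subordinate to the cover
  have hWo : ∀ i : Fin 3, IsOpen ((![W1, W2, W3] : Fin 3 → Set E) i) := by
    intro i; fin_cases i <;> simpa
  have hWc : (univ : Set E) ⊆ ⋃ i, (![W1, W2, W3] : Fin 3 → Set E) i := by
    intro x _
    have hx : x ∈ W1 ∪ W2 ∪ W3 := by rw [hc]; trivial
    rcases hx with (hx | hx) | hx
    · exact mem_iUnion.2 ⟨0, hx⟩
    · exact mem_iUnion.2 ⟨1, hx⟩
    · exact mem_iUnion.2 ⟨2, hx⟩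
  obtain ⟨p, hsub⟩ := PartitionOfUnity.exists_isSubordinate isClosed_univ
    (![W1, W2, W3] : Fin 3 → Set E) hWo hWc
  have hp0 : ∀ x, 0 ≤ p 0 x := fun x => p.nonneg 0 x
  have hp1 : ∀ x, 0 ≤ p 1 x := fun x => p.nonneg 1 x
  have hp2 : ∀ x, 0 ≤ p 2 x := fun x => p.nonneg 2 x
  have hsum : ∀ x, p 0 x + p 1 x + p 2 x = 1 := by
    intro x
    have := p.sum_eq_one (mem_univ x)
    rw [finsum_eq_sum_of_fintype, Fin.sum_univ_three] at this
    exact this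
  -- the map to the triangle
  have hcont : Continuous (fun x : E =>
      ((p 0 x - p 1 x / 2 - p 2 x / 2 : ℝ) : ℂ) +
        (((p 1 x - p 2 x) * (s3 / 2) : ℝ) : ℂ) * Complex.I) := by
    refine ((Complex.continuous_ofReal.comp ?_).add
      ((Complex.continuous_ofReal.comp ?_).mul continuous_const))
    · exact ((p 0).continuous.sub ((p 1).continuous.div_const 2)).sub
        ((p 2).continuous.div_const 2)
    · exact ((p 1).continuous.sub (p 2).continuous).mul continuous_const
  set F : C(E, ℂ) := ⟨_, hcont⟩ with hF
  have hFre : ∀ x, (F x).re = p 0 x - p 1 x / 2 - p 2 x / 2 := by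
    intro x; simp [hF]
  have hFim : ∀ x, (F x).im = (p 1 x - p 2 x) * (s3 / 2) := by
    intro x; simp [hF]
  have hF1 : ∀ x, ‖F x‖ ≤ 1 := by
    intro x
    have hn := norm_sq_complex (F x)
    rw [hFre, hFim] at hn
    have hB : ((p 1 x - p 2 x) * (s3 / 2)) ^ 2 = 3/4 * (p 1 x - p 2 x) ^ 2 := by
      linear_combination ((p 1 x - p 2 x) ^ 2 / 4) * hs3
    rw [hB] at hn
    have h1 : ‖F x‖ ^ 2 ≤ 1 := by
      rw [hn]
      nlinarith [hp0 x, hp1 x, hp2 x, hsum x, mul_nonneg (hp0 x) (hp1 x),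
        mul_nonneg (hp0 x) (hp2 x), mul_nonneg (hp1 x) (hp2 x)]
    nlinarith [norm_nonneg (F x)]
  -- perturb to a nowhere-vanishing map
  obtain ⟨g, hg, hgd⟩ := hd.exists_dist_lt F (by norm_num : (0:ℝ) < 1/8)
  have hg : ∀ x, g x ≠ 0 := hg
  have hcl : ∀ x, ‖F x - g x‖ < 1/8 := by
    intro x
    have := ContinuousMap.dist_apply_le_dist (f := F) (g := g) x
    rw [dist_eq_norm] at this
    linarith
  have hgle : ∀ x, ‖g x‖ < 9/8 := by
    intro x
    have h := norm_sub_norm_le (g x) (F x)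
    rw [norm_sub_rev] at h
    have := hF1 x; have := hcl x; linarith
  have hgpos : ∀ x, 0 < ‖g x‖ := fun x => norm_pos_iff.2 (hg x)
  -- the three cones
  refine ⟨{x | -‖g x‖ < 4 * ((g x).re * 1 + (g x).im * 0)},
    {x | -‖g x‖ < 4 * ((g x).re * (-(1/2)) + (g x).im * (s3/2))},
    {x | -‖g x‖ < 4 * ((g x).re * (-(1/2)) + (g x).im * (-(s3/2)))}, ?_, ?_, ?_, ?_, ?_, ?_, ?_, ?_⟩
  · exact isOpen_lt (g.continuous.norm.neg) (by fun_prop)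
  · exact isOpen_lt (g.continuous.norm.neg) (by fun_prop)
  · exact isOpen_lt (g.continuous.norm.neg) (by fun_prop)
  · -- G1 ⊆ W1
    intro x hx
    simp only [mem_setOf_eq] at hx
    have hpos : 0 < p 0 x := by
      by_contra hp
      have hp' : p 0 x = 0 := le_antisymm (le_of_not_gt hp) (hp0 x)
      have hA : (F x).re * 1 + (F x).im * 0 = -(1/2) := by
        rw [hFre]; have := hsum x; linarith [hFim x]
      have hb := bound1 1 0 (by norm_num) (g x) (F x) (hcl x) hA
      have := hgle x
      linarith
    have : x ∈ tsupport (p 0) := subset_tsupport _ (by simpa [Function.mem_support] using hpos.ne')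
    simpa using hsub 0 this
  · -- G2 ⊆ W2
    intro x hx
    simp only [mem_setOf_eq] at hx
    have hpos : 0 < p 1 x := by
      by_contra hp
      have hp' : p 1 x = 0 := le_antisymm (le_of_not_gt hp) (hp1 x)
      have hA : (F x).re * (-(1/2)) + (F x).im * (s3/2) = -(1/2) := by
        rw [hFre, hFim]
        have h := hsum x
        linear_combination ((p 1 x - p 2 x)/4) * hs3 - (1/2) * h + (3/2) * hp'
      have hb := bound1 (-(1/2)) (s3/2) (by nlinarith) (g x) (F x) (hcl x) hA
      have := hgle x
      linarith
    have : x ∈ tsupport (p 1) := subset_tsupport _ (by simpa [Function.mem_support] using hpos.ne')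
    simpa using hsub 1 this
  · -- G3 ⊆ W3
    intro x hx
    simp only [mem_setOf_eq] at hx
    have hpos : 0 < p 2 x := by
      by_contra hp
      have hp' : p 2 x = 0 := le_antisymm (le_of_not_gt hp) (hp2 x)
      have hA : (F x).re * (-(1/2)) + (F x).im * (-(s3/2)) = -(1/2) := by
        rw [hFre, hFim]
        have h := hsum x
        linear_combination (-(p 1 x - p 2 x)/4) * hs3 - (1/2) * h + (3/2) * hp'
      have hb := bound1 (-(1/2)) (-(s3/2)) (by nlinarith) (g x) (F x) (hcl x) hA
      have := hgle x
      linarith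
    have : x ∈ tsupport (p 2) := subset_tsupport _ (by simpa [Function.mem_support] using hpos.ne')
    simpa using hsub 2 this
  · -- covering
    apply eq_univ_of_forall
    intro x
    simp only [mem_union, mem_setOf_eq]
    by_contra h
    push_neg at h
    obtain ⟨⟨e1, e2⟩, e3⟩ := h
    have := hgpos x
    linarith
  · -- empty triple intersection
    apply eq_empty_iff_forall_notMem.2
    rintro x ⟨⟨e1, e2⟩, e3⟩
    simp only [mem_setOf_eq] at e1 e2 e3
    set zr := (g x).re
    set zi := (g x).im
    set r := ‖g x‖ with hrdef
    have hr2 : r ^ 2 = zr ^ 2 + zi ^ 2 := norm_sq_complex (g x)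
    have hr : 0 < r := hgpos x
    have c1 : zr < r / 2 := by linarith
    have c2 : -zr/2 + zi * (s3/2) < r / 2 := by linarith
    have c3 : -zr/2 - zi * (s3/2) < r / 2 := by linarith
    nlinarith [mul_pos (by linarith : (0:ℝ) < r/2 - zr) (by linarith : (0:ℝ) < 4*zr + r),
      mul_pos (by linarith : (0:ℝ) < r/2 - (-zr/2 + zi * (s3/2)))
        (by linarith : (0:ℝ) < 4*(-zr/2 + zi * (s3/2)) + r),
      mul_pos (by linarith : (0:ℝ) < r/2 - (-zr/2 - zi * (s3/2)))
        (by linarith : (0:ℝ) < 4*(-zr/2 - zi * (s3/2)) + r),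
      mul_pos hr hr, hs3, hr2]

/-- One refinement step: make the triple `(i, j, k)` have empty intersection. -/
lemma step {E : Type*} [TopologicalSpace E] [CompactSpace E] [T2Space E]
    (hd : Dense {f : C(E, ℂ) | ∀ x, f x ≠ 0}) {ι : Type}
    (t : Finset ι) (V : ι → Set E) (hVo : ∀ l, IsOpen (V l)) (hVc : ⋃ l ∈ t, V l = Set.univ)
    (i j k : ι) (hit : i ∈ t) (hjt : j ∈ t) (hij : i ≠ j) (hik : i ≠ k) (hjk : j ≠ k) :
    ∃ V' : ι → Set E, (∀ l, IsOpen (V' l)) ∧ (⋃ l ∈ t, V' l) = Set.univ ∧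
      (∀ l, V' l ⊆ V l) ∧ V' i ∩ V' j ∩ V' k = ∅ := by
  classical
  set W3 : Set E := ⋃ l ∈ (t.erase i).erase j, V l with hW3
  have hW3o : IsOpen W3 := isOpen_biUnion fun l _ => hVo l
  have hcov : V i ∪ V j ∪ W3 = Set.univ := by
    apply Set.eq_univ_of_univ_subset
    rw [← hVc]
    intro x hx
    simp only [Set.mem_iUnion] at hx
    obtain ⟨l, hlt, hxl⟩ := hx
    by_cases hli : l = i
    · exact Or.inl (Or.inl (hli ▸ hxl))
    by_cases hlj : l = j
    · exact Or.inl (Or.inr (hlj ▸ hxl))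
    · exact Or.inr (Set.mem_biUnion (Finset.mem_erase.2 ⟨hlj, Finset.mem_erase.2 ⟨hli, hlt⟩⟩) hxl)
  obtain ⟨G1, G2, G3, hG1o, hG2o, hG3o, hG1s, hG2s, hG3s, hGc, hGe⟩ :=
    key3 hd (V i) (V j) W3 (hVo i) (hVo j) hW3o hcov
  refine ⟨fun l => if l = i then G1 else if l = j then G2 else V l ∩ G3, ?_, ?_, ?_, ?_⟩
  · intro l
    dsimp only
    split_ifs with h h
    exacts [hG1o, hG2o, (hVo l).inter hG3o]
  · apply Set.eq_univ_of_univ_subset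
    intro x _
    have hx : x ∈ G1 ∪ G2 ∪ G3 := by rw [hGc]; trivial
    rcases hx with (hx | hx) | hx
    · exact Set.mem_biUnion hit (by simp [hx])
    · refine Set.mem_biUnion hjt ?_
      rw [if_neg (Ne.symm hij), if_pos rfl]
      exact hx
    · have hx3 : x ∈ W3 := hG3s hx
      simp only [hW3, Set.mem_iUnion] at hx3
      obtain ⟨l, hlt, hxl⟩ := hx3
      obtain ⟨hlj, hli, hlt'⟩ : l ≠ j ∧ l ≠ i ∧ l ∈ t := by
        have h1 := Finset.mem_erase.1 hlt
        have h2 := Finset.mem_erase.1 h1.2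
        exact ⟨h1.1, h2.1, h2.2⟩
      refine Set.mem_biUnion hlt' ?_
      rw [if_neg hli, if_neg hlj]
      exact ⟨hxl, hx⟩
  · intro l
    dsimp only
    split_ifs with h h
    · exact h ▸ hG1s
    · exact h ▸ hG2s
    · exact Set.inter_subset_left
  · dsimp only
    rw [if_pos rfl, if_neg (Ne.symm hij), if_pos rfl, if_neg (Ne.symm hik), if_neg (Ne.symm hjk)]
    apply Set.eq_empty_of_subset_empty
    rw [← hGe]
    exact fun x ⟨⟨hx1, hx2⟩, hx3, hx4⟩ => ⟨⟨hx1, hx2⟩, hx4⟩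

/-- Iterate `step` over a list of triples. -/
lemma aux {E : Type*} [TopologicalSpace E] [CompactSpace E] [T2Space E]
    (hd : Dense {f : C(E, ℂ) | ∀ x, f x ≠ 0}) {ι : Type}
    (t : Finset ι) (L : List (ι × ι × ι)) :
    ∀ V : ι → Set E, (∀ l, IsOpen (V l)) → (⋃ l ∈ t, V l = Set.univ) →
    ∃ V' : ι → Set E, (∀ l, IsOpen (V' l)) ∧ (⋃ l ∈ t, V' l) = Set.univ ∧
      (∀ l, V' l ⊆ V l) ∧
      ∀ q ∈ L, q.1 ∈ t → q.2.1 ∈ t → q.1 ≠ q.2.1 → q.1 ≠ q.2.2 → q.2.1 ≠ q.2.2 →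
        V' q.1 ∩ V' q.2.1 ∩ V' q.2.2 = ∅ := by
  induction L with
  | nil =>
    intro V hVo hVc
    exact ⟨V, hVo, hVc, fun l => Set.Subset.refl _, by simp⟩
  | cons q L ih =>
    intro V hVo hVc
    by_cases hq : q.1 ∈ t ∧ q.2.1 ∈ t ∧ q.1 ≠ q.2.1 ∧ q.1 ≠ q.2.2 ∧ q.2.1 ≠ q.2.2
    · obtain ⟨h1, h2, h3, h4, h5⟩ := hq
      obtain ⟨V1, hV1o, hV1c, hV1s, hV1e⟩ := step hd t V hVo hVc q.1 q.2.1 q.2.2 h1 h2 h3 h4 h5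
      obtain ⟨V', hV'o, hV'c, hV's, hV'L⟩ := ih V1 hV1o hV1c
      refine ⟨V', hV'o, hV'c, fun l => (hV's l).trans (hV1s l), ?_⟩
      intro q' hq' _ _ _ _ _
      rcases List.mem_cons.1 hq' with rfl | hq'
      · apply Set.eq_empty_of_subset_empty
        rw [← hV1e]
        exact fun x ⟨⟨a, b⟩, c⟩ => ⟨⟨hV's _ a, hV's _ b⟩, hV's _ c⟩
      · exact hV'L q' hq' ‹_› ‹_› ‹_› ‹_› ‹_›
    · obtain ⟨V', hV'o, hV'c, hV's, hV'L⟩ := ih V hVo hVc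
      refine ⟨V', hV'o, hV'c, hV's, ?_⟩
      intro q' hq' g1 g2 g3 g4 g5
      rcases List.mem_cons.1 hq' with rfl | hq'
      · exact absurd ⟨g1, g2, g3, g4, g5⟩ hq
      · exact hV'L q' hq' g1 g2 g3 g4 g5

/-- If the invertible (= nowhere-vanishing) elements of `C(E, ℂ)` are dense, then the
compact Hausdorff space `E` has covering dimension at most 1. -/
theorem stmt_2 (E : Type*) [TopologicalSpace E] [CompactSpace E] [T2Space E]
    (hd : Dense {f : C(E, ℂ) | ∀ x, f x ≠ 0}) : CoveringDimLE E 1 := by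
  intro ι U hUo hUc
  classical
  obtain ⟨t, ht⟩ := isCompact_univ.elim_finite_subcover U hUo (by rw [hUc])
  set V0 : ι → Set E := fun i => if i ∈ t then U i else ∅ with hV0
  have hV0o : ∀ l, IsOpen (V0 l) := by
    intro l; simp only [hV0]; split_ifs; exacts [hUo l, isOpen_empty]
  have hV0c : ⋃ l ∈ t, V0 l = Set.univ := by
    apply Set.eq_univ_of_univ_subset
    intro x _
    obtain ⟨l, hlt, hxl⟩ := Set.mem_iUnion₂.1 (ht (Set.mem_univ x))
    exact Set.mem_biUnion hlt (by simp [hV0, hlt, hxl])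
  obtain ⟨V, hVo, hVc, hVs, hVL⟩ := aux hd t (t ×ˢ t ×ˢ t).toList V0 hV0o hV0c
  have hVout : ∀ l ∉ t, V l = ∅ := by
    intro l hl
    have := hVs l
    simp only [hV0, if_neg hl] at this
    exact Set.subset_empty_iff.1 this
  refine ⟨V, hVo, ?_, ?_, ?_⟩
  · apply Set.eq_univ_of_univ_subset
    rw [← hVc]
    exact Set.iUnion₂_subset_iUnion (fun l => l ∈ t) fun l => V l
  · intro l
    have := hVs l
    simp only [hV0] at this
    split_ifs at this
    · exact this
    · exact this.trans (Set.empty_subset _)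
  · intro x
    have hfin : {i | x ∈ V i}.Finite := by
      apply Set.Finite.subset t.finite_toSet
      intro l hl
      simp only [Set.mem_setOf_eq] at hl
      by_contra hlt
      rw [hVout l (fun h => hlt (Finset.mem_coe.2 h))] at hl
      exact hl
    refine ⟨hfin, ?_⟩
    by_contra hcard
    push_neg at hcard
    obtain ⟨a, b, c, ha, hb, hc, hab, hac, hbc⟩ := (Set.two_lt_ncard_iff hfin).1 hcard
    simp only [Set.mem_setOf_eq] at ha hb hc
    have hat : a ∈ t := by by_contra h; rw [hVout a h] at ha; exact ha
    have hbt : b ∈ t := by by_contra h; rw [hVout b h] at hb; exact hb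
    have hct : c ∈ t := by by_contra h; rw [hVout c h] at hc; exact hc
    have hmem : (a, b, c) ∈ (t ×ˢ t ×ˢ t).toList := by
      rw [Finset.mem_toList]
      exact Finset.mem_product.2 ⟨hat, Finset.mem_product.2 ⟨hbt, hct⟩⟩
    have := hVL (a, b, c) hmem hat hbt hab hac hbc
    exact absurd this (by
      apply Set.nonempty_iff_ne_empty.1
      exact ⟨x, ⟨ha, hb⟩, hc⟩)
end

section
/- Let E be a compact Hausdorff space of Lebesgue covering dimension ≥ 2. Then there exists a continuous function f : E → ℂ that cannot be uniformly approximated by nowhere-vanishing continuous functions; i.e., the nowhere-vanishing functions are not dense in C(E, ℂ). -/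
open Set

/-- Separator property: any two pairs of disjoint closed sets admit
"partitions" (complements of `Pᵢ ∪ Qᵢ`) that are disjoint. -/
def SepProp (X : Type*) [TopologicalSpace X] : Prop :=
  ∀ A₁ B₁ A₂ B₂ : Set X, IsClosed A₁ → IsClosed B₁ → IsClosed A₂ → IsClosed B₂ →
    Disjoint A₁ B₁ → Disjoint A₂ B₂ →
    ∃ P₁ Q₁ P₂ Q₂ : Set X, IsOpen P₁ ∧ IsOpen Q₁ ∧ IsOpen P₂ ∧ IsOpen Q₂ ∧
      A₁ ⊆ P₁ ∧ B₁ ⊆ Q₁ ∧ A₂ ⊆ P₂ ∧ B₂ ⊆ Q₂ ∧ Disjoint P₁ Q₁ ∧ Disjoint P₂ Q₂ ∧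
      ∀ x, x ∈ P₁ ∪ Q₁ ∨ x ∈ P₂ ∪ Q₂

/-- Density of nowhere-vanishing functions gives the separator property. -/
theorem sepProp_of_dense {X : Type*} [TopologicalSpace X] [CompactSpace X] [T2Space X]
    (hd : ∀ f : C(X, ℂ), ∀ ε > (0 : ℝ), ∃ g : C(X, ℂ), (∀ x, g x ≠ 0) ∧ ‖f - g‖ < ε) :
    SepProp X := by
  intro A₁ B₁ A₂ B₂ hA₁ hB₁ hA₂ hB₂ h₁ h₂
  obtain ⟨f₁, hf₁A, hf₁B, -⟩ := exists_continuous_zero_one_of_isClosed hA₁ hB₁ h₁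
  obtain ⟨f₂, hf₂A, hf₂B, -⟩ := exists_continuous_zero_one_of_isClosed hA₂ hB₂ h₂
  set F : C(X, ℂ) := ⟨fun x => ((2 * f₁ x - 1 : ℝ) : ℂ) + ((2 * f₂ x - 1 : ℝ) : ℂ) * Complex.I,
    by fun_prop⟩ with hF
  obtain ⟨g, hg, hlt⟩ := hd F 1 one_pos
  have key : ∀ x, ‖F x - g x‖ < 1 := by
    intro x
    have h1 : ‖(F - g) x‖ ≤ ‖F - g‖ := ContinuousMap.norm_coe_le_norm _ x
    rw [ContinuousMap.sub_apply] at h1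
    calc ‖F x - g x‖ = ‖F x - g x‖ := rfl
      _ ≤ ‖F - g‖ := h1
      _ < 1 := hlt
  have hFre : ∀ x, (F x).re = 2 * f₁ x - 1 := by intro x; simp [hF]
  have hFim : ∀ x, (F x).im = 2 * f₂ x - 1 := by intro x; simp [hF]
  have hgre : Continuous fun x => (g x).re := Complex.continuous_re.comp g.continuous
  have hgim : Continuous fun x => (g x).im := Complex.continuous_im.comp g.continuous
  refine ⟨{x | (g x).re < 0}, {x | 0 < (g x).re}, {x | (g x).im < 0}, {x | 0 < (g x).im},
    isOpen_lt hgre continuous_const, isOpen_lt continuous_const hgre,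
    isOpen_lt hgim continuous_const, isOpen_lt continuous_const hgim, ?_, ?_, ?_, ?_, ?_, ?_, ?_⟩
  · intro x hx
    have hre : (F x).re = -1 := by rw [hFre, hf₁A hx]; norm_num
    have := (Complex.abs_re_le_norm (F x - g x)).trans_lt (key x)
    rw [Complex.sub_re, hre] at this
    have := abs_lt.1 this
    simpa using by linarith [this.1, this.2]
  · intro x hx
    have hre : (F x).re = 1 := by rw [hFre, hf₁B hx]; norm_num
    have := (Complex.abs_re_le_norm (F x - g x)).trans_lt (key x)
    rw [Complex.sub_re, hre] at this
    have := abs_lt.1 this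
    simpa using by linarith [this.1, this.2]
  · intro x hx
    have him : (F x).im = -1 := by rw [hFim, hf₂A hx]; norm_num
    have := (Complex.abs_im_le_norm (F x - g x)).trans_lt (key x)
    rw [Complex.sub_im, him] at this
    have := abs_lt.1 this
    simpa using by linarith [this.1, this.2]
  · intro x hx
    have him : (F x).im = 1 := by rw [hFim, hf₂B hx]; norm_num
    have := (Complex.abs_im_le_norm (F x - g x)).trans_lt (key x)
    rw [Complex.sub_im, him] at this
    have := abs_lt.1 this
    simpa using by linarith [this.1, this.2]
  · rw [Set.disjoint_left]; intro x hx hx'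
    exact absurd hx (by simpa using le_of_lt hx')
  · rw [Set.disjoint_left]; intro x hx hx'
    exact absurd hx (by simpa using le_of_lt hx')
  · intro x
    rcases lt_trichotomy ((g x).re) 0 with h | h | h
    · exact Or.inl (Or.inl h)
    · rcases lt_trichotomy ((g x).im) 0 with h' | h' | h'
      · exact Or.inr (Or.inl h')
      · exact absurd (Complex.ext h h') (hg x)
      · exact Or.inr (Or.inr h')
    · exact Or.inl (Or.inr h)

/-- From the separator property: any open cover by three sets admits an open
shrinking with empty triple intersection. -/
theorem three_cover_shrink {X : Type*} [TopologicalSpace X] [NormalSpace X]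
    (hsep : SepProp X) (U₁ U₂ U₃ : Set X) (h₁ : IsOpen U₁) (h₂ : IsOpen U₂) (h₃ : IsOpen U₃)
    (hc : ∀ x, x ∈ U₁ ∪ U₂ ∪ U₃) :
    ∃ W₁ W₂ W₃ : Set X, IsOpen W₁ ∧ IsOpen W₂ ∧ IsOpen W₃ ∧
      W₁ ⊆ U₁ ∧ W₂ ⊆ U₂ ∧ W₃ ⊆ U₃ ∧ (∀ x, x ∈ W₁ ∪ W₂ ∪ W₃) ∧ W₁ ∩ W₂ ∩ W₃ = ∅ := by
  -- shrink U₁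
  have hs₁ : IsClosed ((U₂ ∪ U₃)ᶜ) := (h₂.union h₃).isClosed_compl
  have hsub₁ : (U₂ ∪ U₃)ᶜ ⊆ U₁ := by
    intro x hx
    rcases hc x with (h | h) | h
    · exact h
    · exact absurd (Or.inl h) hx
    · exact absurd (Or.inr h) hx
  obtain ⟨V₁, hV₁o, hV₁s, hV₁c⟩ := normal_exists_closure_subset hs₁ h₁ hsub₁
  have hcov₁ : ∀ x, x ∈ V₁ ∪ U₂ ∪ U₃ := by
    intro x
    by_cases h : x ∈ U₂ ∪ U₃
    · rcases h with h | h
      · exact Or.inl (Or.inr h)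
      · exact Or.inr h
    · exact Or.inl (Or.inl (hV₁s h))
  -- shrink U₂
  have hs₂ : IsClosed ((V₁ ∪ U₃)ᶜ) := (hV₁o.union h₃).isClosed_compl
  have hsub₂ : (V₁ ∪ U₃)ᶜ ⊆ U₂ := by
    intro x hx
    rcases hcov₁ x with (h | h) | h
    · exact absurd (Or.inl h) hx
    · exact h
    · exact absurd (Or.inr h) hx
  obtain ⟨V₂, hV₂o, hV₂s, hV₂c⟩ := normal_exists_closure_subset hs₂ h₂ hsub₂
  have hcov₂ : ∀ x, x ∈ V₁ ∪ V₂ ∪ U₃ := by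
    intro x
    by_cases h : x ∈ V₁ ∪ U₃
    · rcases h with h | h
      · exact Or.inl (Or.inl h)
      · exact Or.inr h
    · exact Or.inl (Or.inr (hV₂s h))
  -- separators
  obtain ⟨P₁, Q₁, P₂, Q₂, hP₁, hQ₁, hP₂, hQ₂, hA₁, hB₁, hA₂, hB₂, hd₁, hd₂, hfin⟩ :=
    hsep (closure V₁) (U₁ᶜ) (closure V₂) (U₂ᶜ) isClosed_closure h₁.isClosed_compl
      isClosed_closure h₂.isClosed_compl
      (Set.disjoint_left.2 fun x hx hx' => hx' (hV₁c hx))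
      (Set.disjoint_left.2 fun x hx hx' => hx' (hV₂c hx))
  have hP₁U : P₁ ⊆ U₁ := by
    intro x hx
    by_contra hxu
    exact Set.disjoint_left.1 hd₁ hx (hB₁ hxu)
  have hP₂U : P₂ ⊆ U₂ := by
    intro x hx
    by_contra hxu
    exact Set.disjoint_left.1 hd₂ hx (hB₂ hxu)
  refine ⟨P₁, P₂, U₃ ∩ (Q₁ ∪ Q₂), hP₁, hP₂, h₃.inter (hQ₁.union hQ₂), hP₁U, hP₂U,
    Set.inter_subset_left, ?_, ?_⟩
  · intro x
    by_cases hx₁ : x ∈ P₁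
    · exact Or.inl (Or.inl hx₁)
    by_cases hx₂ : x ∈ P₂
    · exact Or.inl (Or.inr hx₂)
    have hxq : x ∈ Q₁ ∨ x ∈ Q₂ := by
      rcases hfin x with (h | h) | (h | h)
      · exact absurd h hx₁
      · exact Or.inl h
      · exact absurd h hx₂
      · exact Or.inr h
    have hxv₁ : x ∉ V₁ := fun h => hx₁ (hA₁ (subset_closure h))
    have hxv₂ : x ∉ V₂ := fun h => hx₂ (hA₂ (subset_closure h))
    have hxu₃ : x ∈ U₃ := by
      rcases hcov₂ x with (h | h) | h
      · exact absurd h hxv₁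
      · exact absurd h hxv₂
      · exact h
    exact Or.inr ⟨hxu₃, hxq⟩
  · apply Set.eq_empty_iff_forall_notMem.2
    rintro x ⟨⟨hx, hx'⟩, -, hq | hq⟩
    · exact Set.disjoint_left.1 hd₁ hx hq
    · exact Set.disjoint_left.1 hd₂ hx' hq

/-- Iteratively kill triple intersections in a finite open cover. -/
theorem kill_triples {X : Type*} [TopologicalSpace X] [NormalSpace X] (hsep : SepProp X)
    {ι : Type*} (s : Finset ι) (T : Finset (ι × ι × ι))
    (hT : ∀ t ∈ T, t.1 ∈ s ∧ t.2.1 ∈ s ∧ t.2.2 ∈ s)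
    (U : ι → Set X) (hU : ∀ i, IsOpen (U i)) (hcov : ∀ x, ∃ i ∈ s, x ∈ U i) :
    ∃ V : ι → Set X, (∀ i, IsOpen (V i)) ∧ (∀ i, V i ⊆ U i) ∧ (∀ x, ∃ i ∈ s, x ∈ V i) ∧
      ∀ t ∈ T, t.1 ≠ t.2.1 → t.1 ≠ t.2.2 → t.2.1 ≠ t.2.2 →
        V t.1 ∩ V t.2.1 ∩ V t.2.2 = ∅ := by
  classical
  induction T using Finset.induction_on with
  | empty => exact ⟨U, hU, fun i => le_refl _, hcov, fun t ht => absurd ht (Finset.notMem_empty t)⟩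
  | @insert t T htT ih =>
    obtain ⟨V, hVo, hVs, hVc, hVt⟩ := ih fun t' ht' => hT t' (Finset.mem_insert_of_mem ht')
    obtain ⟨a, b, c⟩ := t
    obtain ⟨ha, hb, hc⟩ := hT (a, b, c) (Finset.mem_insert_self _ _)
    by_cases hdist : a ≠ b ∧ a ≠ c ∧ b ≠ c
    · obtain ⟨hab, hac, hbc⟩ := hdist
      -- apply the 3-cover lemma to V a, V b, rest
      have hrest : IsOpen (⋃ j ∈ (s.erase a).erase b, V j) := by
        apply isOpen_biUnion; intro j _; exact hVo j
      have hcov3 : ∀ x, x ∈ V a ∪ V b ∪ ⋃ j ∈ (s.erase a).erase b, V j := by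
        intro x
        obtain ⟨j, hjs, hjx⟩ := hVc x
        by_cases hja : j = a
        · exact Or.inl (Or.inl (hja ▸ hjx))
        by_cases hjb : j = b
        · exact Or.inl (Or.inr (hjb ▸ hjx))
        · exact Or.inr (Set.mem_biUnion (Finset.mem_erase.2 ⟨hjb, Finset.mem_erase.2 ⟨hja, hjs⟩⟩) hjx)
      obtain ⟨W₁, W₂, W₃, hW₁o, hW₂o, hW₃o, hW₁s, hW₂s, hW₃s, hWc, hWe⟩ :=
        three_cover_shrink hsep (V a) (V b) (⋃ j ∈ (s.erase a).erase b, V j)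
          (hVo a) (hVo b) hrest hcov3
      set V' : ι → Set X := fun j =>
        if j = a then W₁ else if j = b then W₂ else if j = c then V c ∩ W₃ else V j with hV'
      have hV'sub : ∀ j, V' j ⊆ V j := by
        intro j
        simp only [hV']
        split_ifs with h1 h2 h3
        · exact h1 ▸ hW₁s
        · exact h2 ▸ hW₂s
        · exact h3 ▸ Set.inter_subset_left
        · exact le_refl _
      have hV'a : V' a = W₁ := by simp [hV']
      have hV'b : V' b = W₂ := by simp [hV', hab.symm]
      have hV'c : V' c = V c ∩ W₃ := by simp [hV', hac.symm, hbc.symm]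
      refine ⟨V', ?_, fun j => (hV'sub j).trans (hVs j), ?_, ?_⟩
      · intro j
        simp only [hV']
        split_ifs
        · exact hW₁o
        · exact hW₂o
        · exact (hVo c).inter hW₃o
        · exact hVo j
      · intro x
        rcases hWc x with (h | h) | h
        · exact ⟨a, ha, hV'a ▸ h⟩
        · exact ⟨b, hb, hV'b ▸ h⟩
        · have hx3 := hW₃s h
          obtain ⟨j, hjs, hjx⟩ := Set.mem_iUnion₂.1 hx3
          have hjs' := Finset.mem_erase.1 hjs
          have hjs'' := Finset.mem_erase.1 hjs'.2
          by_cases hjc : j = c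
          · refine ⟨c, hc, hV'c ▸ ⟨hjc ▸ hjx, h⟩⟩
          · refine ⟨j, hjs''.2, ?_⟩
            simp only [hV', if_neg hjs''.1, if_neg hjs'.1, if_neg hjc]
            exact hjx
      · intro t' ht' h1 h2 h3
        rcases Finset.mem_insert.1 ht' with rfl | ht'
        · apply Set.eq_empty_of_subset_empty
          calc V' a ∩ V' b ∩ V' c ⊆ W₁ ∩ W₂ ∩ W₃ := by
                rw [hV'a, hV'b, hV'c]
                exact Set.inter_subset_inter (le_refl _) Set.inter_subset_right
            _ = ∅ := hWe
        · have := hVt t' ht' h1 h2 h3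
          apply Set.eq_empty_of_subset_empty
          rw [← this]
          exact Set.inter_subset_inter
            (Set.inter_subset_inter (hV'sub _) (hV'sub _)) (hV'sub _)
    · -- degenerate triple: old V works
      refine ⟨V, hVo, hVs, hVc, ?_⟩
      intro t' ht' h1 h2 h3
      rcases Finset.mem_insert.1 ht' with rfl | ht'
      · exact absurd ⟨h1, h2, h3⟩ hdist
      · exact hVt t' ht' h1 h2 h3

/-- On a compact Hausdorff space of covering dimension ≥ 2 there is a continuous
complex-valued function that cannot be uniformly approximated by nowhere-vanishing
continuous functions. -/
theorem stmt_3 (E : Type*) [TopologicalSpace E] [CompactSpace E] [T2Space E]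
    (hdim : ¬ CoveringDimLE E 1) :
    ∃ f : C(E, ℂ), ∃ ε > (0 : ℝ), ∀ g : C(E, ℂ), (∀ x, g x ≠ 0) → ε ≤ ‖f - g‖ := by
  classical
  by_contra hcon
  push_neg at hcon
  have hd : ∀ f : C(E, ℂ), ∀ ε > (0 : ℝ), ∃ g : C(E, ℂ), (∀ x, g x ≠ 0) ∧ ‖f - g‖ < ε := by
    intro f ε hε
    obtain ⟨g, hg, hlt⟩ := hcon f ε hε
    exact ⟨g, hg, hlt⟩
  have hsep : SepProp E := sepProp_of_dense hd
  apply hdim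
  intro ι U hUo hUc
  -- finite subcover
  obtain ⟨s, hs⟩ := IsCompact.elim_finite_subcover isCompact_univ U hUo (by rw [hUc])
  have hcov : ∀ x : E, ∃ i ∈ s, x ∈ U i := by
    intro x
    have := hs (Set.mem_univ x)
    simpa using this
  obtain ⟨V', hV'o, hV's, hV'c, hV't⟩ :=
    kill_triples hsep s (s ×ˢ s ×ˢ s)
      (fun t ht => by
        rw [Finset.mem_product, Finset.mem_product] at ht
        exact ⟨ht.1, ht.2.1, ht.2.2⟩)
      U hUo hcov
  refine ⟨fun i => if i ∈ s then V' i else ∅, ?_, ?_, ?_, ?_⟩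
  · intro i
    dsimp only
    split_ifs
    · exact hV'o i
    · exact isOpen_empty
  · apply Set.eq_univ_of_forall
    intro x
    obtain ⟨i, his, hix⟩ := hV'c x
    exact Set.mem_iUnion.2 ⟨i, by simp [his, hix]⟩
  · intro i
    dsimp only
    split_ifs
    · exact hV's i
    · exact Set.empty_subset _
  · intro x
    have hkey : ∀ i : ι, x ∈ (if i ∈ s then V' i else ∅) → i ∈ s ∧ x ∈ V' i := by
      intro i hi
      by_cases his : i ∈ s
      · rw [if_pos his] at hi
        exact ⟨his, hi⟩
      · rw [if_neg his] at hi
        exact absurd hi (Set.notMem_empty x)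
    have hsub : {i | x ∈ (fun i => if i ∈ s then V' i else ∅) i} ⊆ ↑s := by
      intro i hi
      exact (hkey i hi).1
    have hfin : {i | x ∈ (fun i => if i ∈ s then V' i else ∅) i}.Finite :=
      s.finite_toSet.subset hsub
    refine ⟨hfin, ?_⟩
    by_contra hcard
    push_neg at hcard
    obtain ⟨t, hts, htcard⟩ := Set.exists_subset_card_eq (Nat.succ_le_of_lt hcard)
    obtain ⟨a, b, c, hab, hac, hbc, rfl⟩ := Set.ncard_eq_three.1 htcard
    have hmem : ∀ j ∈ ({a, b, c} : Set ι), j ∈ s ∧ x ∈ V' j := by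
      intro j hj
      exact hkey j (hts hj)
    obtain ⟨has, hax⟩ := hmem a (by simp)
    obtain ⟨hbs, hbx⟩ := hmem b (by simp)
    obtain ⟨hcs, hcx⟩ := hmem c (by simp)
    have htrip : (a, b, c) ∈ s ×ˢ s ×ˢ s := by
      rw [Finset.mem_product, Finset.mem_product]
      exact ⟨has, hbs, hcs⟩
    have := hV't (a, b, c) htrip hab hac hbc
    rw [Set.eq_empty_iff_forall_notMem] at this
    exact this x ⟨⟨hax, hbx⟩, hcx⟩
end

section
/- Let X be a compact Hausdorff space, F a set of continuous nowhere-vanishing functions on X, and define X₁ = {(x, y) ∈ X × ℂ^F : y(f)² = f(x) for all f ∈ F} with the product topology. Then X₁ is a compact Hausdorff space and the projection p : X₁ → X, p(x, y) = x, is a continuous surjection. -/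
/-- The first stage of Cole's square-root extension construction: the subset of
`X × ℂ^F` consisting of pairs `(x, y)` with `y(f)² = f(x)` for all `f ∈ F`. -/
def ColeExt (X : Type*) [TopologicalSpace X] (F : Set C(X, ℂ)) : Set (X × (F → ℂ)) :=
  {z | ∀ f : F, z.2 f ^ 2 = (f : C(X, ℂ)) z.1}

theorem coleExt_closed (X : Type*) [TopologicalSpace X] (F : Set C(X, ℂ)) :
    IsClosed (ColeExt X F) := by
  have : ColeExt X F = ⋂ f : F, {z : X × (F → ℂ) | z.2 f ^ 2 = (f : C(X, ℂ)) z.1} := by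
    ext z; simp [ColeExt]
  rw [this]
  refine isClosed_iInter fun f => isClosed_eq ?_ ?_
  · exact ((continuous_apply (f : F) ).comp continuous_snd).pow 2
  · exact (f : C(X, ℂ)).continuous.comp continuous_fst

/-- The Cole extension `X₁` of a compact Hausdorff space `X` by square roots of a family
`F` of nowhere-vanishing functions is compact Hausdorff, and the natural projection
`X₁ → X` is a continuous surjection. -/
theorem stmt_7 (X : Type*) [TopologicalSpace X] [CompactSpace X] [T2Space X]
    (F : Set C(X, ℂ)) (hF : ∀ f ∈ F, ∀ x, f x ≠ 0) :
    IsCompact (ColeExt X F) ∧ T2Space ↥(ColeExt X F) ∧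
      Continuous (fun z : ↥(ColeExt X F) => (z : X × (F → ℂ)).1) ∧
      Function.Surjective (fun z : ↥(ColeExt X F) => (z : X × (F → ℂ)).1) := by
  refine ⟨?_, inferInstance, continuous_fst.comp continuous_subtype_val, ?_⟩
  · -- compactness: closed subset of a compact set
    have hK : IsCompact ((Set.univ : Set X) ×ˢ
        Set.pi Set.univ (fun f : F => Metric.closedBall (0 : ℂ) (Real.sqrt ‖(f : C(X, ℂ))‖))) :=
      isCompact_univ.prod (isCompact_univ_pi fun f => isCompact_closedBall 0 _)
    refine hK.of_isClosed_subset (coleExt_closed X F) ?_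
    rintro ⟨x, y⟩ hz
    refine ⟨Set.mem_univ _, fun f _ => ?_⟩
    have h1 : ‖y f‖ ^ 2 = ‖(f : C(X, ℂ)) x‖ := by
      rw [← norm_pow, hz f]
    have h2 : ‖(f : C(X, ℂ)) x‖ ≤ ‖(f : C(X, ℂ))‖ :=
      (f : C(X, ℂ)).norm_coe_le_norm x
    simp only [Metric.mem_closedBall, dist_zero_right]
    calc ‖y f‖ = Real.sqrt (‖y f‖ ^ 2) := by
            rw [Real.sqrt_sq (norm_nonneg _)]
      _ ≤ Real.sqrt ‖(f : C(X, ℂ))‖ := Real.sqrt_le_sqrt (h1 ▸ h2)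
  · intro x
    have h : ∀ f : F, ∃ w : ℂ, w ^ 2 = (f : C(X, ℂ)) x := fun f =>
      IsAlgClosed.exists_pow_nat_eq _ (n := 2) zero_lt_two
    choose y hy using h
    exact ⟨⟨(x, y), hy⟩, rfl⟩
end

section
/- Let A be a commutative unital Banach algebra over ℂ with dense invertibles, E a closed subset of the maximal ideal space 𝔐_A, and B the sup-norm closure in C(E, ℂ) of the restrictions to E of the Gelfand transforms of elements of A. Then B has dense invertibles. -/
/-- If `A` is a commutative unital Banach algebra with dense invertibles and `E` is a
closed subset of the maximal ideal space, then the uniform closure `B` on `E` of the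
restricted Gelfand transforms has dense invertibles (invertibility taken in `B`). -/
theorem stmt_12 (A : Type*) [NormedCommRing A] [NormedAlgebra ℂ A] [CompleteSpace A]
    (hd : Dense {a : A | IsUnit a})
    (E : Set (WeakDual.characterSpace ℂ A)) (hE : IsClosed E)
    (B : Set C(↥E, ℂ))
    (hB : B = closure {f : C(↥E, ℂ) |
      ∃ a : A, f = ContinuousMap.restrict E (WeakDual.gelfandTransform ℂ A a)}) :
    B ⊆ closure {g : C(↥E, ℂ) | g ∈ B ∧ ∃ h ∈ B, g * h = 1} := by
  haveI : CompactSpace ↥E := isCompact_iff_compactSpace.mp hE.isCompact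
  set T : A → C(↥E, ℂ) :=
    fun a => ContinuousMap.restrict E (WeakDual.gelfandTransform ℂ A a) with hT
  set S : Set C(↥E, ℂ) := {f : C(↥E, ℂ) | ∃ a : A, f = T a} with hS
  have hSB : S ⊆ B := hB ▸ subset_closure
  -- norm bound for T
  have hTnorm : ∀ c : A, ‖T c‖ ≤ ‖(1 : A)‖ * ‖c‖ := by
    intro c
    refine ContinuousMap.norm_le _ (mul_nonneg (norm_nonneg _) (norm_nonneg _)) |>.mpr ?_
    intro x
    have h1 : ‖WeakDual.toStrongDual ((x : WeakDual.characterSpace ℂ A) :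
        WeakDual ℂ A)‖ ≤ ‖(1 : A)‖ := WeakDual.CharacterSpace.norm_le_norm_one _
    exact ContinuousLinearMap.le_of_opNorm_le _ h1 c
  have hTadd : ∀ a b : A, T a - T b = T (a - b) := by
    intro a b
    ext x
    simp [hT, map_sub]
  intro f hf
  rw [Metric.mem_closure_iff]
  intro ε hε
  have hfB : f ∈ closure S := hB ▸ hf
  obtain ⟨g, hgS, hfg⟩ := Metric.mem_closure_iff.mp hfB (ε / 2) (by linarith)
  obtain ⟨a, rfl⟩ := hgS
  set δ : ℝ := ε / 2 / (‖(1 : A)‖ + 1) with hδdef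
  have h1pos : (0:ℝ) < ‖(1 : A)‖ + 1 := by positivity
  have hδ : 0 < δ := by positivity
  obtain ⟨u, huU, hau⟩ := Metric.mem_closure_iff.mp (hd.closure_eq ▸ Set.mem_univ a) δ hδ
  obtain ⟨v, rfl⟩ := huU
  refine ⟨T v, ⟨hSB ⟨v, rfl⟩, ⟨T ↑v⁻¹, hSB ⟨↑v⁻¹, rfl⟩, ?_⟩⟩, ?_⟩
  · ext x
    have h : ((x : WeakDual.characterSpace ℂ A)) ((v : A) * (↑v⁻¹ : A)) = 1 := by
      rw [Units.mul_inv, map_one]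
    rw [map_mul] at h
    simp only [hT, ContinuousMap.mul_apply, ContinuousMap.one_apply,
      ContinuousMap.restrict_apply, WeakDual.gelfandTransform_apply_apply]
    exact h
  · have hdist : dist (T a) (T ↑v) ≤ ‖(1 : A)‖ * dist a (↑v) := by
      rw [dist_eq_norm, dist_eq_norm, hTadd]
      exact hTnorm _
    have : ‖(1 : A)‖ * dist a (↑v) < ε / 2 := by
      calc ‖(1 : A)‖ * dist a ↑v ≤ (‖(1 : A)‖ + 1) * dist a ↑v := by
            apply mul_le_mul_of_nonneg_right (by linarith) dist_nonneg
        _ < (‖(1 : A)‖ + 1) * δ := by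
            exact mul_lt_mul_of_pos_left hau h1pos
        _ = ε / 2 := by rw [hδdef]; field_simp
    calc dist f (T ↑v) ≤ dist f (T a) + dist (T a) (T ↑v) := dist_triangle _ _ _
      _ < ε / 2 + ε / 2 := by linarith
      _ = ε := by ring
end

section
/- Let E be a compact Hausdorff space with covering dimension ≤ 1. Then every continuous map f : E → ℂ can be uniformly approximated by continuous maps E → ℂ∖{0}; i.e., nowhere-vanishing functions are dense in C(E, ℂ). -/
open Set MeasureTheory

/-- A segment in `ℂ` has Lebesgue measure zero. -/
lemma volume_segment_zero (a b : ℂ) : volume (segment ℝ a b) = 0 := by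
  have hsub : segment ℝ a b ⊆ (affineSpan ℝ ({a, b} : Set ℂ) : Set ℂ) := by
    rw [← convexHull_pair]
    exact convexHull_subset_affineSpan _
  refine measure_mono_null hsub (Measure.addHaar_affineSubspace _ _ ?_)
  intro htop
  have hdir : vectorSpan ℝ ({a, b} : Set ℂ) = ⊤ := by
    rw [← direction_affineSpan, htop, AffineSubspace.direction_top]
  have h1 : Module.finrank ℝ (vectorSpan ℝ ({a, b} : Set ℂ)) ≤ 1 := by
    rw [vectorSpan_pair]
    by_cases h : a -ᵥ b = 0
    · rw [h, Submodule.span_zero_singleton]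
      simp
    · rw [finrank_span_singleton h]
  rw [hdir, finrank_top, Complex.finrank_real_complex] at h1
  omega

/-- A segment is compact. -/
lemma isCompact_segment' (a b : ℂ) : IsCompact (segment ℝ a b) := by
  rw [segment_eq_image ℝ a b]
  exact isCompact_Icc.image (by fun_prop)

/-- On a compact Hausdorff space of covering dimension at most 1, the nowhere-vanishing
continuous functions are dense in `C(E, ℂ)`. -/
theorem stmt_19 (E : Type*) [TopologicalSpace E] [CompactSpace E] [T2Space E]
    (hdim : CoveringDimLE E 1) : Dense {f : C(E, ℂ) | ∀ x, f x ≠ 0} := by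
  classical
  rw [Metric.dense_iff]
  intro f ε hε
  set δ := ε / 4 with hδdef
  have hδ0 : 0 < δ := by positivity
  -- finite subcover of small balls
  obtain ⟨s, hs⟩ := IsCompact.elim_finite_subcover (isCompact_univ (X := E))
    (fun c : ℂ => f ⁻¹' Metric.ball c δ)
    (fun c => Metric.isOpen_ball.preimage f.continuous)
    (fun x _ => mem_iUnion.2 ⟨f x, by simp [hδ0]⟩)
  set ι : Type := ↥s with hι
  -- apply the dimension hypothesis
  obtain ⟨V, hVopen, hVcover, hVsub, hVord⟩ := hdim ι
    (fun i => f ⁻¹' Metric.ball (i : ℂ) δ)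
    (fun i => Metric.isOpen_ball.preimage f.continuous)
    (by
      apply eq_univ_of_univ_subset
      intro x hx
      obtain ⟨c, hc, hxc⟩ := mem_iUnion₂.1 (hs hx)
      exact mem_iUnion.2 ⟨⟨c, hc⟩, hxc⟩)
  -- partition of unity subordinate to V
  obtain ⟨ρ, hρ⟩ := PartitionOfUnity.exists_isSubordinate (s := univ) isClosed_univ V hVopen
    (by rw [hVcover])
  set g : E → ℂ := fun x => ∑ i : ι, ρ i x • (i : ℂ) with hg
  have hgcont : Continuous g := by
    apply continuous_finset_sum
    intro i _
    exact ((ρ i).continuous).smul continuous_const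
  have hsum1 : ∀ x : E, ∑ i : ι, ρ i x = 1 := by
    intro x
    have := ρ.sum_eq_one (mem_univ x)
    rwa [finsum_eq_sum_of_fintype] at this
  have hmemV : ∀ (i : ι) (x : E), ρ i x ≠ 0 → x ∈ V i := fun i x hne =>
    hρ i (subset_tsupport _ hne)
  -- approximation bound
  have happrox : ∀ x : E, ‖g x - f x‖ ≤ δ := by
    intro x
    have heq : g x - f x = ∑ i : ι, ρ i x • ((i : ℂ) - f x) := by
      simp only [smul_sub, Finset.sum_sub_distrib, ← Finset.sum_smul, hsum1 x, one_smul, hg]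
    rw [heq]
    calc ‖∑ i : ι, ρ i x • ((i : ℂ) - f x)‖
        ≤ ∑ i : ι, ‖ρ i x • ((i : ℂ) - f x)‖ := norm_sum_le _ _
      _ ≤ ∑ i : ι, ρ i x * δ := by
          apply Finset.sum_le_sum
          intro i _
          rw [norm_smul, Real.norm_eq_abs, abs_of_nonneg (ρ.nonneg i x)]
          by_cases hne : ρ i x = 0
          · simp [hne]
          · have hx : x ∈ f ⁻¹' Metric.ball (i : ℂ) δ := hVsub i (hmemV i x hne)
            have : ‖(i : ℂ) - f x‖ < δ := by
              rw [← dist_eq_norm, dist_comm]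
              exact hx
            exact mul_le_mul_of_nonneg_left this.le (ρ.nonneg i x)
      _ = δ := by rw [← Finset.sum_mul, hsum1 x, one_mul]
  -- the bad set: union of segments between the centers
  set B : Set ℂ := ⋃ p : ι × ι, segment ℝ (p.1 : ℂ) (p.2 : ℂ) with hB
  have hgB : ∀ x : E, g x ∈ B := by
    intro x
    set S : Finset ι := Finset.univ.filter (fun i => ρ i x ≠ 0) with hS
    have hgS : g x = ∑ i ∈ S, ρ i x • (i : ℂ) := by
      rw [hg]
      refine (Finset.sum_subset (Finset.filter_subset _ _) ?_).symm
      intro i _ hiS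
      have : ρ i x = 0 := by
        by_contra hne
        exact hiS (Finset.mem_filter.2 ⟨Finset.mem_univ i, hne⟩)
      simp [this]
    have hSsum : ∑ i ∈ S, ρ i x = 1 := by
      rw [← hsum1 x]
      refine Finset.sum_subset (Finset.filter_subset _ _) ?_
      intro i _ hiS
      by_contra hne
      exact hiS (Finset.mem_filter.2 ⟨Finset.mem_univ i, hne⟩)
    have hScard : S.card ≤ 2 := by
      obtain ⟨hfin, hcard⟩ := hVord x
      have hsub : (S : Set ι) ⊆ {i | x ∈ V i} := by
        intro i hi
        exact hmemV i x (Finset.mem_filter.1 hi).2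
      calc S.card = (S : Set ι).ncard := (Set.ncard_coe_finset S).symm
        _ ≤ {i | x ∈ V i}.ncard := Set.ncard_le_ncard hsub hfin
        _ ≤ 2 := hcard
    have hSne : S.Nonempty := by
      rcases S.eq_empty_or_nonempty with h | h
      · exfalso; rw [h] at hSsum; simp at hSsum
      · exact h
    have h1 : 1 ≤ S.card := Finset.card_pos.2 hSne
    interval_cases h : S.card
    · -- card = 1
      obtain ⟨i, hi⟩ := Finset.card_eq_one.1 h
      rw [hi] at hgS hSsum
      simp only [Finset.sum_singleton] at hgS hSsum
      rw [hgS, hSsum, one_smul]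
      exact mem_iUnion.2 ⟨(i, i), left_mem_segment ℝ _ _⟩
    · -- card = 2
      obtain ⟨i, j, hij, hij2⟩ := Finset.card_eq_two.1 h
      rw [hij2] at hgS hSsum
      rw [Finset.sum_pair hij] at hgS hSsum
      exact mem_iUnion.2 ⟨(i, j), ρ i x, ρ j x, ρ.nonneg i x, ρ.nonneg j x, hSsum, hgS.symm⟩
  -- B is closed with empty interior
  have hBclosed : IsClosed B := by
    apply isClosed_iUnion_of_finite
    exact fun p => (isCompact_segment' _ _).isClosed
  have hB0 : volume B = 0 := measure_iUnion_null fun p => volume_segment_zero _ _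
  have hBint : interior B = ∅ := by
    by_contra hne
    have hpos : 0 < volume (interior B) :=
      (isOpen_interior.measure_pos volume (nonempty_iff_ne_empty.2 hne))
    have : volume (interior B) ≤ 0 := hB0 ▸ measure_mono interior_subset
    exact absurd (this.trans_lt hpos) (lt_irrefl _)
  have hBc : Dense Bᶜ := by
    rwa [← interior_eq_empty_iff_dense_compl]
  -- pick a small translation avoiding B
  obtain ⟨t, htball, htB⟩ := Metric.dense_iff.1 hBc 0 δ hδ0
  -- the approximating nowhere-vanishing function
  refine ⟨⟨fun x => g x - t, by fun_prop⟩, ?_, ?_⟩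
  · -- in the ball
    rw [Metric.mem_ball, ContinuousMap.dist_lt_iff hε]
    intro x
    simp only [ContinuousMap.coe_mk]
    calc dist (g x - t) (f x) ≤ dist (g x - t) (g x) + dist (g x) (f x) := dist_triangle _ _ _
      _ = ‖t‖ + ‖g x - f x‖ := by
          rw [dist_eq_norm, dist_eq_norm]; congr 1
          simp [sub_sub_cancel_left]
      _ ≤ δ + δ := by
          gcongr
          · exact le_of_lt (by simpa [Metric.mem_ball, dist_eq_norm] using htball)
          · exact happrox x
      _ < ε := by rw [hδdef]; linarith
  · -- nowhere vanishing
    intro x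
    simp only [ContinuousMap.coe_mk]
    intro h0
    have : g x = t := by linear_combination h0
    exact htB (this ▸ hgB x)
end
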